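/- arXiv:2601.01771 — 2 statements merged into one kernel-verified Lean document; each statement's English description precedes it below -/
import Mathlib

section
/- The subgroup of GL(3,ℝ) generated by the matrices τ₂, δ and ρ is isomorphic to the symmetric group S₄ (the group of permutations of a four-element set). -/
open Matrix

noncomputable section AuxS4

open Equiv Equiv.Perm

def Vm : Matrix (Fin 3) (Fin 4) ℝ := !![1,1,-1,-1; 1,-1,1,-1; 1,-1,-1,1]

def Wm : Matrix (Fin 4) (Fin 3) ℝ :=
  !![1/4,1/4,1/4; 1/4,-1/4,-1/4; -1/4,1/4,-1/4; -1/4,-1/4,1/4]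

def Jm : Matrix (Fin 4) (Fin 4) ℝ := Matrix.of fun _ _ => 1

def Pm (σ : Equiv.Perm (Fin 4)) : Matrix (Fin 4) (Fin 4) ℝ :=
  Matrix.of fun i j => if i = σ j then 1 else 0

lemma VW : Vm * Wm = 1 := by
  ext i j
  fin_cases i <;> fin_cases j <;>
    simp [Vm, Wm, Matrix.mul_apply, Fin.sum_univ_four, Matrix.one_apply, Fin.ext_iff,
      Matrix.vecHead, Matrix.vecTail] <;>
    norm_num [show ((3:Fin 4):ℕ) = 3 from rfl]

lemma WV : Wm * Vm = 1 - (1/4 : ℝ) • Jm := by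
  ext i j
  fin_cases i <;> fin_cases j <;>
    simp [Vm, Wm, Jm, Matrix.mul_apply, Fin.sum_univ_three, Matrix.one_apply, Fin.ext_iff,
      Matrix.vecHead, Matrix.vecTail] <;>
    norm_num [show ((3:Fin 4):ℕ) = 3 from rfl]

lemma JP (σ : Equiv.Perm (Fin 4)) : Jm * Pm σ = Jm := by
  ext i j
  simp [Jm, Pm, Matrix.mul_apply]

lemma JW : Jm * Wm = 0 := by
  ext i j
  fin_cases j <;>
    simp [Jm, Wm, Matrix.mul_apply, Fin.sum_univ_four, Matrix.vecHead, Matrix.vecTail] <;>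
    norm_num

lemma VJ : Vm * Jm = 0 := by
  ext i j
  fin_cases i <;>
    simp [Jm, Vm, Matrix.mul_apply, Fin.sum_univ_four, Matrix.vecHead, Matrix.vecTail]

lemma PJ (σ : Equiv.Perm (Fin 4)) : Pm σ * Jm = Jm := by
  ext i j
  simp only [Pm, Jm, Matrix.mul_apply, Matrix.of_apply, mul_one]
  rw [Finset.sum_eq_single (σ⁻¹ i)]
  · simp
  · intro b _ hb
    simp only [ite_eq_right_iff]
    intro h
    exact absurd (by rw [h, Equiv.Perm.inv_def, Equiv.symm_apply_apply]) hb
  · simp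

lemma Pm_mul (σ τ : Equiv.Perm (Fin 4)) : Pm (σ * τ) = Pm σ * Pm τ := by
  ext i j
  simp only [Pm, Matrix.of_apply, Matrix.mul_apply]
  rw [Finset.sum_eq_single (τ j)] <;>
    simp +contextual [Equiv.Perm.mul_apply, eq_comm] <;> congr

lemma Pm_one : Pm 1 = 1 := by
  ext i j
  simp [Pm, Matrix.one_apply, eq_comm] <;> congr

/-- The (sign-twisted) standard representation matrix. -/
def fmat (σ : Equiv.Perm (Fin 4)) : Matrix (Fin 3) (Fin 3) ℝ :=
  ((Equiv.Perm.sign σ : ℤ) : ℝ) • (Vm * Pm σ * Wm)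

lemma fmat_one : fmat 1 = 1 := by
  simp [fmat, Pm_one, VW]

lemma WVP (σ : Equiv.Perm (Fin 4)) : Wm * Vm * Pm σ * Wm = Pm σ * Wm := by
  rw [WV, Matrix.sub_mul, Matrix.sub_mul, Matrix.one_mul, Matrix.smul_mul, Matrix.smul_mul,
    JP, JW, smul_zero, sub_zero]

lemma fmat_mul (σ τ : Equiv.Perm (Fin 4)) : fmat (σ * τ) = fmat σ * fmat τ := by
  have h : Vm * Pm σ * Wm * (Vm * Pm τ * Wm) = Vm * Pm (σ * τ) * Wm := by
    rw [Pm_mul]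
    calc Vm * Pm σ * Wm * (Vm * Pm τ * Wm)
        = Vm * Pm σ * (Wm * Vm * Pm τ * Wm) := by simp only [Matrix.mul_assoc]
      _ = Vm * Pm σ * (Pm τ * Wm) := by rw [WVP]
      _ = Vm * (Pm σ * Pm τ) * Wm := by simp only [Matrix.mul_assoc]
  have hs : ((Equiv.Perm.sign (σ * τ) : ℤ) : ℝ)
      = ((Equiv.Perm.sign σ : ℤ) : ℝ) * ((Equiv.Perm.sign τ : ℤ) : ℝ) := by
    rw [Equiv.Perm.sign_mul]; push_cast; ring
  rw [fmat, fmat, fmat, Matrix.smul_mul, Matrix.mul_smul, smul_smul, h, hs, mul_comm]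

/-- The sign-twisted standard representation as a map into GL(3,ℝ). -/
def Fgl : Equiv.Perm (Fin 4) →* GL (Fin 3) ℝ where
  toFun σ := ⟨fmat σ, fmat σ⁻¹, by rw [← fmat_mul, mul_inv_cancel, fmat_one],
    by rw [← fmat_mul, inv_mul_cancel, fmat_one]⟩
  map_one' := Units.ext fmat_one
  map_mul' σ τ := Units.ext (fmat_mul σ τ)

lemma Fgl_coe (σ : Equiv.Perm (Fin 4)) : (Fgl σ : Matrix (Fin 3) (Fin 3) ℝ) = fmat σ := rfl

lemma VP (σ : Equiv.Perm (Fin 4)) :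
    Vm * Pm σ = Matrix.of fun k j => Vm k (σ j) := by
  ext k j
  simp only [Pm, Matrix.of_apply, Matrix.mul_apply]
  rw [Finset.sum_eq_single (σ j)] <;> simp +contextual [eq_comm]

lemma col_eq (ε : ℝ) (hε : ε = 1 ∨ ε = -1) (c j : Fin 4)
    (h : ∀ k, ε * Vm k c = Vm k j) : c = j := by
  have h0 := h 0
  have h1 := h 1
  have h2 := h 2
  clear h
  fin_cases c <;> fin_cases j <;> first
    | rfl
    | (rcases hε with rfl | rfl <;>
        norm_num [Vm, Matrix.vecHead, Matrix.vecTail, Fin.ext_iff, Matrix.cons_val_two,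
          show ((3:Fin 4):ℕ) = 3 from rfl] at *)

lemma Fgl_injective : Function.Injective Fgl := by
  rw [injective_iff_map_eq_one]
  intro σ hσ
  have h1 : fmat σ = 1 := by
    have := congrArg Units.val hσ
    simpa [Fgl_coe] using this
  have h2 : ((Equiv.Perm.sign σ : ℤ) : ℝ) • (Vm * Pm σ) = Vm := by
    have h3 := congrArg (· * Vm) h1
    simp only [fmat, Matrix.smul_mul, Matrix.one_mul] at h3
    rw [Matrix.mul_assoc (Vm * Pm σ) Wm Vm, WV, Matrix.mul_sub, Matrix.mul_one,
      Matrix.mul_smul, Matrix.mul_assoc Vm (Pm σ) Jm, PJ, VJ, smul_zero, sub_zero] at h3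
    exact h3
  have key : ∀ k j, ((Equiv.Perm.sign σ : ℤ) : ℝ) * Vm k (σ j) = Vm k j := by
    intro k j
    have h4 := congrFun (congrFun h2 k) j
    rw [VP] at h4
    simpa using h4
  have hε : ((Equiv.Perm.sign σ : ℤ) : ℝ) = 1 ∨ ((Equiv.Perm.sign σ : ℤ) : ℝ) = -1 := by
    rcases Int.units_eq_one_or (Equiv.Perm.sign σ) with h | h <;> rw [h] <;> norm_num
  have hfix : ∀ j, σ j = j := fun j => col_eq _ hε (σ j) j (fun k => key k j)
  exact Equiv.ext fun j => hfix j

/-- generator permutations -/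
def στ : Equiv.Perm (Fin 4) := Equiv.swap 0 2 * Equiv.swap 1 3
def σδ : Equiv.Perm (Fin 4) := Equiv.swap 0 1 * Equiv.swap 1 2
def σρ : Equiv.Perm (Fin 4) := Equiv.swap 0 1

lemma closure_gens : Subgroup.closure ({στ, σδ, σρ} : Set (Equiv.Perm (Fin 4))) = ⊤ := by
  set c : Equiv.Perm (Fin 4) := στ * σρ with hcdef
  have hc : c.IsCycle := by
    refine ⟨0, by decide, ?_⟩
    intro y hy
    have h4 : y = 0 ∨ y = 1 ∨ y = 2 ∨ y = 3 := by revert y; decide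
    rcases h4 with rfl | rfl | rfl | rfl
    · exact ⟨0, by decide⟩
    · exact ⟨2, by rw [show (2:ℤ) = ((2:ℕ):ℤ) by norm_num, zpow_natCast]; decide⟩
    · exact ⟨3, by rw [show (3:ℤ) = ((3:ℕ):ℤ) by norm_num, zpow_natCast]; decide⟩
    · exact ⟨1, by rw [zpow_one]; decide⟩
  have hsupp : c.support = Finset.univ := by decide
  rw [eq_top_iff, ← Equiv.Perm.closure_cycle_adjacent_swap hc hsupp 3, Subgroup.closure_le]
  have hστ : στ ∈ Subgroup.closure ({στ, σδ, σρ} : Set (Equiv.Perm (Fin 4))) :=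
    Subgroup.subset_closure (by simp)
  have hσδ : σδ ∈ Subgroup.closure ({στ, σδ, σρ} : Set (Equiv.Perm (Fin 4))) :=
    Subgroup.subset_closure (by simp)
  have hσρ : σρ ∈ Subgroup.closure ({στ, σδ, σρ} : Set (Equiv.Perm (Fin 4))) :=
    Subgroup.subset_closure (by simp)
  rintro x (rfl | rfl)
  · exact Subgroup.mul_mem _ hστ hσρ
  · have hx : Equiv.swap (3 : Fin 4) (c 3) = στ * (σδ⁻¹ * (σρ * σδ)) := by decide
    rw [hx]
    exact Subgroup.mul_mem _ hστ
      (Subgroup.mul_mem _ (Subgroup.inv_mem _ hσδ) (Subgroup.mul_mem _ hσρ hσδ))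

end AuxS4

/-- The matrix representing the automorphism δ of `V_{L₂}`. -/
noncomputable def δ : GL (Fin 3) ℝ :=
  Matrix.GeneralLinearGroup.mkOfDetNeZero !![0,1,0; 0,0,-1; -1,0,0]
    (by norm_num [Matrix.det_fin_three, Matrix.cons_val_two, Matrix.vecHead, Matrix.vecTail])

/-- The matrix representing the automorphism τ₁ of `V_{L₂}`. -/
noncomputable def τ₁ : GL (Fin 3) ℝ :=
  Matrix.GeneralLinearGroup.mkOfDetNeZero !![1,0,0; 0,-1,0; 0,0,-1]
    (by norm_num [Matrix.det_fin_three, Matrix.cons_val_two, Matrix.vecHead, Matrix.vecTail])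

/-- The matrix representing the automorphism τ₂ of `V_{L₂}`. -/
noncomputable def τ₂ : GL (Fin 3) ℝ :=
  Matrix.GeneralLinearGroup.mkOfDetNeZero !![-1,0,0; 0,1,0; 0,0,-1]
    (by norm_num [Matrix.det_fin_three, Matrix.cons_val_two, Matrix.vecHead, Matrix.vecTail])

/-- The matrix representing the automorphism ρ of `V_{L₂}`. -/
noncomputable def ρ : GL (Fin 3) ℝ :=
  Matrix.GeneralLinearGroup.mkOfDetNeZero !![-1,0,0; 0,0,1; 0,1,0]
    (by norm_num [Matrix.det_fin_three, Matrix.cons_val_two, Matrix.vecHead, Matrix.vecTail])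

lemma Fgl_στ : Fgl στ = τ₂ := by
  apply Units.ext
  rw [Fgl_coe]
  have hτ : (τ₂ : Matrix (Fin 3) (Fin 3) ℝ) = !![-1,0,0; 0,1,0; 0,0,-1] := rfl
  have hs : ((Equiv.Perm.sign στ : ℤ) : ℝ) = 1 := by
    norm_num [show Equiv.Perm.sign στ = 1 from by decide]
  have hP : Pm στ = !![0,0,1,0; 0,0,0,1; 1,0,0,0; 0,1,0,0] := by
    ext i j
    fin_cases i <;> fin_cases j <;>
      simp [Pm, show (στ 0 = 2 ∧ στ 1 = 3 ∧ στ 2 = 0 ∧ στ 3 = 1) from by decide,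
        Fin.ext_iff, Matrix.vecHead, Matrix.vecTail] <;>
      norm_num [show ((3:Fin 4):ℕ) = 3 from rfl]
  rw [hτ, fmat, hs, hP, one_smul]
  ext i j
  fin_cases i <;> fin_cases j <;>
    simp [Vm, Wm, Matrix.mul_apply, Fin.sum_univ_four, Fin.sum_univ_three,
      Matrix.vecHead, Matrix.vecTail, Fin.ext_iff] <;>
    norm_num [show ((3:Fin 4):ℕ) = 3 from rfl]

lemma Fgl_σδ : Fgl σδ = δ := by
  apply Units.ext
  rw [Fgl_coe]
  have hτ : (δ : Matrix (Fin 3) (Fin 3) ℝ) = !![0,1,0; 0,0,-1; -1,0,0] := rfl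
  have hs : ((Equiv.Perm.sign σδ : ℤ) : ℝ) = 1 := by
    norm_num [show Equiv.Perm.sign σδ = 1 from by decide]
  have hP : Pm σδ = !![0,0,1,0; 1,0,0,0; 0,1,0,0; 0,0,0,1] := by
    ext i j
    fin_cases i <;> fin_cases j <;>
      simp [Pm, show (σδ 0 = 1 ∧ σδ 1 = 2 ∧ σδ 2 = 0 ∧ σδ 3 = 3) from by decide,
        Fin.ext_iff, Matrix.vecHead, Matrix.vecTail] <;>
      norm_num [show ((3:Fin 4):ℕ) = 3 from rfl]
  rw [hτ, fmat, hs, hP, one_smul]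
  ext i j
  fin_cases i <;> fin_cases j <;>
    simp [Vm, Wm, Matrix.mul_apply, Fin.sum_univ_four, Fin.sum_univ_three,
      Matrix.vecHead, Matrix.vecTail, Fin.ext_iff] <;>
    norm_num [show ((3:Fin 4):ℕ) = 3 from rfl]

set_option maxHeartbeats 1000000 in
lemma Fgl_σρ : Fgl σρ = ρ := by
  apply Units.ext
  rw [Fgl_coe]
  have hτ : (ρ : Matrix (Fin 3) (Fin 3) ℝ) = !![-1,0,0; 0,0,1; 0,1,0] := rfl
  have hs : ((Equiv.Perm.sign σρ : ℤ) : ℝ) = -1 := by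
    norm_num [show Equiv.Perm.sign σρ = -1 from by decide]
  have hP : Pm σρ = !![0,1,0,0; 1,0,0,0; 0,0,1,0; 0,0,0,1] := by
    ext i j
    fin_cases i <;> fin_cases j <;>
      simp [Pm, show (σρ 0 = 1 ∧ σρ 1 = 0 ∧ σρ 2 = 2 ∧ σρ 3 = 3) from by decide,
        Fin.ext_iff, Matrix.vecHead, Matrix.vecTail] <;>
      norm_num [show ((3:Fin 4):ℕ) = 3 from rfl]
  rw [hτ, fmat, hs, hP, neg_one_smul]
  ext i j
  fin_cases i <;> fin_cases j <;>
    simp [Vm, Wm, Matrix.mul_apply, Matrix.neg_apply, Fin.sum_univ_four, Fin.sum_univ_three,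
      Matrix.vecHead, Matrix.vecTail, Fin.ext_iff] <;>
    norm_num [show ((3:Fin 4):ℕ) = 3 from rfl]

lemma Fgl_range : Fgl.range = Subgroup.closure ({τ₂, δ, ρ} : Set (GL (Fin 3) ℝ)) := by
  rw [MonoidHom.range_eq_map, ← closure_gens, MonoidHom.map_closure]
  congr 1
  rw [Set.image_insert_eq, Set.image_insert_eq, Set.image_singleton, Fgl_στ, Fgl_σδ, Fgl_σρ]

/-- The subgroup of GL(3,ℝ) generated by τ₂, δ and ρ is isomorphic to the
symmetric group S₄. -/
theorem subgroup_closure_tau2_delta_rho_iso_S4 :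
    Nonempty ((Subgroup.closure {τ₂, δ, ρ} : Subgroup (GL (Fin 3) ℝ)) ≃* Equiv.Perm (Fin 4)) := by
  exact ⟨((MulEquiv.subgroupCongr Fgl_range).symm.trans
    (MonoidHom.ofInjective Fgl_injective).symm)⟩
end

section
/- The matrix P = ρ·τ₂ lies in the subgroup G = ⟨τ₁, δ, ρ⟩ of GL(3,ℝ), and the centralizer of P in G equals the cyclic subgroup generated by P; in particular the centralizer C_G(P) is isomorphic to ℤ/4ℤ. -/
open Matrix

/-- The matrix `P = ρ·τ₂`. -/
noncomputable def P : GL (Fin 3) ℝ := ρ * τ₂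

/-! ### Auxiliary definitions and lemmas -/

/-- Entrywise cast of integer matrices to real matrices, as a ring hom. -/
noncomputable def phiZ : Matrix (Fin 3) (Fin 3) ℤ →+* Matrix (Fin 3) (Fin 3) ℝ :=
  (Int.castRingHom ℝ).mapMatrix

lemma phiZ_mat (a b c d e f g h i : ℤ) :
    phiZ !![a,b,c; d,e,f; g,h,i] = !![(a:ℝ),b,c; d,e,f; g,h,i] := by
  show Matrix.map _ _ = _
  ext x y
  fin_cases x <;> fin_cases y <;> rfl

lemma phiZ_inj : Function.Injective phiZ :=
  Matrix.map_injective Int.cast_injective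

/-- Integer versions of the generators. -/
def dZ : Matrix (Fin 3) (Fin 3) ℤ := !![0,1,0; 0,0,-1; -1,0,0]
def t1Z : Matrix (Fin 3) (Fin 3) ℤ := !![1,0,0; 0,-1,0; 0,0,-1]
def rZ : Matrix (Fin 3) (Fin 3) ℤ := !![-1,0,0; 0,0,1; 0,1,0]
/-- Integer version of `P`. -/
def PZ : Matrix (Fin 3) (Fin 3) ℤ := !![1,0,0; 0,0,-1; 0,1,0]

lemma coe_δ : (↑δ : Matrix (Fin 3) (Fin 3) ℝ) = phiZ dZ := by
  rw [dZ, phiZ_mat]; norm_num; rfl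

lemma coe_τ₁ : (↑τ₁ : Matrix (Fin 3) (Fin 3) ℝ) = phiZ t1Z := by
  rw [t1Z, phiZ_mat]; norm_num; rfl

lemma coe_ρ : (↑ρ : Matrix (Fin 3) (Fin 3) ℝ) = phiZ rZ := by
  rw [rZ, phiZ_mat]; norm_num; rfl

lemma coe_τ₂ : (↑τ₂ : Matrix (Fin 3) (Fin 3) ℝ) = phiZ !![-1,0,0; 0,1,0; 0,0,-1] := by
  rw [phiZ_mat]; norm_num; rfl

/-- The 24 signed permutation matrices of determinant 1 (the rotation group of the cube). -/
def Tlist : List (Matrix (Fin 3) (Fin 3) ℤ) :=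
[!![1,0,0; 0,1,0; 0,0,1], !![1,0,0; 0,-1,0; 0,0,-1], !![-1,0,0; 0,1,0; 0,0,-1],
 !![-1,0,0; 0,-1,0; 0,0,1], !![1,0,0; 0,0,1; 0,-1,0], !![1,0,0; 0,0,-1; 0,1,0],
 !![-1,0,0; 0,0,1; 0,1,0], !![-1,0,0; 0,0,-1; 0,-1,0], !![0,1,0; 1,0,0; 0,0,-1],
 !![0,1,0; -1,0,0; 0,0,1], !![0,-1,0; 1,0,0; 0,0,1], !![0,-1,0; -1,0,0; 0,0,-1],
 !![0,1,0; 0,0,1; 1,0,0], !![0,1,0; 0,0,-1; -1,0,0], !![0,-1,0; 0,0,1; -1,0,0],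
 !![0,-1,0; 0,0,-1; 1,0,0], !![0,0,1; 1,0,0; 0,1,0], !![0,0,1; -1,0,0; 0,-1,0],
 !![0,0,-1; 1,0,0; 0,-1,0], !![0,0,-1; -1,0,0; 0,1,0], !![0,0,1; 0,1,0; -1,0,0],
 !![0,0,1; 0,-1,0; 1,0,0], !![0,0,-1; 0,1,0; 1,0,0], !![0,0,-1; 0,-1,0; -1,0,0]]

set_option maxHeartbeats 4000000 in
lemma Tmul : ∀ m ∈ Tlist, ∀ n ∈ Tlist, m * n ∈ Tlist := by decide

lemma Tinv : ∀ m ∈ Tlist, ∃ n ∈ Tlist, m * n = 1 := by decide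

lemma Tcen : ∀ m ∈ Tlist, m * PZ = PZ * m →
    m = 1 ∨ m = PZ ∨ m = PZ * PZ ∨ m = PZ * PZ * PZ := by decide

lemma coe_P : (↑P : Matrix (Fin 3) (Fin 3) ℝ) = phiZ PZ := by
  show (↑(ρ * τ₂) : Matrix (Fin 3) (Fin 3) ℝ) = _
  rw [Units.val_mul, coe_ρ, coe_τ₂, ← _root_.map_mul]
  exact congrArg phiZ (by decide)

lemma coe_P_pow (k : ℕ) : (↑(P ^ k) : Matrix (Fin 3) (Fin 3) ℝ) = phiZ (PZ ^ k) := by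
  rw [Units.val_pow_eq_pow_val, coe_P, ← _root_.map_pow]

lemma P_pow_eq_one_iff (k : ℕ) : P ^ k = 1 ↔ PZ ^ k = 1 := by
  constructor
  · intro h
    apply phiZ_inj
    rw [← coe_P_pow, h, Units.val_one, _root_.map_one]
  · intro h
    apply Units.ext
    rw [coe_P_pow, h, _root_.map_one, Units.val_one]

/-- every element of the closure is (as a matrix) the cast of an element of `Tlist`. -/
lemma mem_Tlist {g : GL (Fin 3) ℝ} (hg : g ∈ Subgroup.closure {τ₁, δ, ρ}) :
    ∃ m ∈ Tlist, (↑g : Matrix (Fin 3) (Fin 3) ℝ) = phiZ m := by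
  induction hg using Subgroup.closure_induction with
  | mem x hx =>
    rcases hx with h | h | h
    · exact ⟨t1Z, by decide, by rw [h, coe_τ₁]⟩
    · exact ⟨dZ, by decide, by rw [h, coe_δ]⟩
    · exact ⟨rZ, by rw [Set.mem_singleton_iff] at h; decide, by
        rw [Set.mem_singleton_iff] at h; rw [h, coe_ρ]⟩
  | one => exact ⟨1, by decide, by rw [Units.val_one, _root_.map_one]⟩
  | mul x y hx hy ihx ihy =>
    obtain ⟨m, hm, hxm⟩ := ihx
    obtain ⟨n, hn, hyn⟩ := ihy
    exact ⟨m * n, Tmul m hm n hn, by rw [Units.val_mul, hxm, hyn, _root_.map_mul]⟩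
  | inv x hx ihx =>
    obtain ⟨m, hm, hxm⟩ := ihx
    obtain ⟨n, hn, hmn⟩ := Tinv m hm
    refine ⟨n, hn, ?_⟩
    have key : (↑x : Matrix (Fin 3) (Fin 3) ℝ) * phiZ n = 1 := by
      rw [hxm, ← _root_.map_mul, hmn, _root_.map_one]
    calc (↑x⁻¹ : Matrix (Fin 3) (Fin 3) ℝ)
        = ↑x⁻¹ * ((↑x : Matrix (Fin 3) (Fin 3) ℝ) * phiZ n) := by rw [key, mul_one]
      _ = (↑x⁻¹ * (↑x : Matrix (Fin 3) (Fin 3) ℝ)) * phiZ n := by rw [mul_assoc]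
      _ = phiZ n := by rw [← Units.val_mul, inv_mul_cancel, Units.val_one, one_mul]

lemma τ₂_mem : τ₂ ∈ Subgroup.closure ({τ₁, δ, ρ} : Set (GL (Fin 3) ℝ)) := by
  have hδ : δ ∈ Subgroup.closure ({τ₁, δ, ρ} : Set (GL (Fin 3) ℝ)) :=
    Subgroup.subset_closure (by simp)
  have hτ₁ : τ₁ ∈ Subgroup.closure ({τ₁, δ, ρ} : Set (GL (Fin 3) ℝ)) :=
    Subgroup.subset_closure (by simp)
  have : τ₂ = δ * δ * τ₁ * δ := by
    apply Units.ext
    rw [Units.val_mul, Units.val_mul, Units.val_mul, coe_δ, coe_τ₁, coe_τ₂,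
      ← _root_.map_mul, ← _root_.map_mul, ← _root_.map_mul]
    exact congrArg phiZ (by decide)
  rw [this]
  exact mul_mem (mul_mem (mul_mem hδ hδ) hτ₁) hδ

lemma P_mem : P ∈ Subgroup.closure ({τ₁, δ, ρ} : Set (GL (Fin 3) ℝ)) :=
  mul_mem (Subgroup.subset_closure (by simp)) τ₂_mem

lemma orderOf_P : orderOf P = 4 := by
  rw [orderOf_eq_iff (by norm_num)]
  constructor
  · rw [P_pow_eq_one_iff]; decide
  · intro m hm hm'
    interval_cases m <;>
      · rw [Ne, P_pow_eq_one_iff]; decide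


lemma cen_eq :
    Subgroup.centralizer {(⟨P, P_mem⟩ : Subgroup.closure ({τ₁, δ, ρ} : Set (GL (Fin 3) ℝ)))} =
      Subgroup.zpowers (⟨P, P_mem⟩ : Subgroup.closure ({τ₁, δ, ρ} : Set (GL (Fin 3) ℝ))) := by
  apply le_antisymm
  · intro x hx
    rw [Subgroup.mem_centralizer_iff] at hx
    have hc : (⟨P, P_mem⟩ : Subgroup.closure ({τ₁, δ, ρ} : Set (GL (Fin 3) ℝ))) * x =
        x * ⟨P, P_mem⟩ := hx _ rfl
    obtain ⟨m, hm, hxm⟩ := mem_Tlist x.2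
    have hc' : (↑P : Matrix (Fin 3) (Fin 3) ℝ) * ((x : GL (Fin 3) ℝ) : Matrix (Fin 3) (Fin 3) ℝ) = ((x : GL (Fin 3) ℝ) : Matrix (Fin 3) (Fin 3) ℝ) * (↑P : Matrix (Fin 3) (Fin 3) ℝ) := by
      have h1 := congrArg
        (fun z : Subgroup.closure ({τ₁, δ, ρ} : Set (GL (Fin 3) ℝ)) =>
          ((z : GL (Fin 3) ℝ) : Matrix (Fin 3) (Fin 3) ℝ)) hc
      simpa only [MulMemClass.coe_mul, Units.val_mul] using h1
    have hcm : m * PZ = PZ * m := by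
      apply phiZ_inj
      rw [_root_.map_mul, _root_.map_mul, ← hxm, ← coe_P]
      exact hc'.symm
    have key : ∀ k : ℕ, (((x : GL (Fin 3) ℝ) : Matrix (Fin 3) (Fin 3) ℝ) : Matrix (Fin 3) (Fin 3) ℝ) = phiZ (PZ ^ k) →
        x ∈ Subgroup.zpowers (⟨P, P_mem⟩ : Subgroup.closure ({τ₁, δ, ρ} : Set (GL (Fin 3) ℝ))) := by
      intro k hk
      rw [Subgroup.mem_zpowers_iff]
      refine ⟨(k : ℤ), ?_⟩
      rw [zpow_natCast]
      apply Subtype.ext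
      apply Units.ext
      calc ((((⟨P, P_mem⟩ : Subgroup.closure ({τ₁, δ, ρ} : Set (GL (Fin 3) ℝ))) ^ k :
              Subgroup.closure ({τ₁, δ, ρ} : Set (GL (Fin 3) ℝ))) : GL (Fin 3) ℝ) :
            Matrix (Fin 3) (Fin 3) ℝ)
          = (↑(P ^ k) : Matrix (Fin 3) (Fin 3) ℝ) := by rw [SubmonoidClass.coe_pow]
        _ = phiZ (PZ ^ k) := coe_P_pow k
        _ = ((x : GL (Fin 3) ℝ) : Matrix (Fin 3) (Fin 3) ℝ) := hk.symm
    rcases Tcen m hm hcm with h | h | h | h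
    · exact key 0 (by rw [hxm, h]; exact congrArg phiZ (by decide))
    · exact key 1 (by rw [hxm, h]; exact congrArg phiZ (by decide))
    · exact key 2 (by rw [hxm, h]; exact congrArg phiZ (by decide))
    · exact key 3 (by rw [hxm, h]; exact congrArg phiZ (by decide))
  · intro x hx
    rw [Subgroup.mem_centralizer_iff]
    intro g hg
    rw [Set.mem_singleton_iff] at hg
    subst hg
    obtain ⟨k, hk⟩ := Subgroup.mem_zpowers_iff.mp hx
    rw [← hk]
    exact ((Commute.refl _).zpow_right k).eq

/-- `P = ρ·τ₂` lies in `G = ⟨τ₁, δ, ρ⟩`, its centralizer in `G` is the cyclic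
subgroup it generates, and this centralizer is isomorphic to ℤ/4ℤ. -/
theorem centralizer_P_in_S4_eq_zpowers :
    ∃ hP : P ∈ (Subgroup.closure {τ₁, δ, ρ} : Subgroup (GL (Fin 3) ℝ)),
      Subgroup.centralizer {(⟨P, hP⟩ : Subgroup.closure {τ₁, δ, ρ})} =
        Subgroup.zpowers (⟨P, hP⟩ : Subgroup.closure {τ₁, δ, ρ}) ∧
      Nonempty ((Subgroup.centralizer {(⟨P, hP⟩ : Subgroup.closure {τ₁, δ, ρ})})
        ≃* Multiplicative (ZMod 4)) := by
  refine ⟨P_mem, cen_eq, ?_⟩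
  rw [cen_eq]
  have hord : orderOf (⟨P, P_mem⟩ : Subgroup.closure ({τ₁, δ, ρ} : Set (GL (Fin 3) ℝ))) = 4 := by
    rw [Subgroup.orderOf_mk]; exact orderOf_P
  have hcyc : IsCyclic
      (Subgroup.zpowers (⟨P, P_mem⟩ : Subgroup.closure ({τ₁, δ, ρ} : Set (GL (Fin 3) ℝ)))) := by
    refine ⟨⟨⟨_, Subgroup.mem_zpowers (⟨P, P_mem⟩ :
      Subgroup.closure ({τ₁, δ, ρ} : Set (GL (Fin 3) ℝ)))⟩, fun x => ?_⟩⟩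
    obtain ⟨k, hk⟩ := Subgroup.mem_zpowers_iff.mp x.2
    exact Subgroup.mem_zpowers_iff.mpr
      ⟨k, Subtype.ext (by rw [SubgroupClass.coe_zpow]; exact hk)⟩
  have hcard : Nat.card
      (Subgroup.zpowers (⟨P, P_mem⟩ : Subgroup.closure ({τ₁, δ, ρ} : Set (GL (Fin 3) ℝ)))) = 4 := by
    rw [Nat.card_zpowers, hord]
  rw [← hcard]
  exact ⟨(zmodCyclicMulEquiv hcyc).symm⟩
end
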